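/- Define the principal-direction curve γ_N of γ by γ_N′(s) = N(s). Then γ_N is a unit-speed curve with tangent T₁ = N, curvature κ₁ = √(κ² + τ²) > 0, and torsion τ₁ = (κ²/(κ² + τ²))·(τ/κ)′, where torsion is taken with respect to the Frenet frame of γ_N. -/

import Mathlib

open scoped RealInnerProductSpace

noncomputable def cross3 (x y : EuclideanSpace ℝ (Fin 3)) : EuclideanSpace ℝ (Fin 3) :=
  WithLp.toLp 2 ![x 1 * y 2 - x 2 * y 1, x 2 * y 0 - x 0 * y 2, x 0 * y 1 - x 1 * y 0]

lemma cross3_smul_right (c : ℝ) (x y : EuclideanSpace ℝ (Fin 3)) :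
    cross3 x (c • y) = c • cross3 x y := by
  ext i; fin_cases i <;> simp [cross3, PiLp.smul_apply] <;> ring

lemma cross3_add_right (x y z : EuclideanSpace ℝ (Fin 3)) :
    cross3 x (y + z) = cross3 x y + cross3 x z := by
  ext i; fin_cases i <;> simp [cross3, PiLp.add_apply] <;> ring

lemma cross3_skew (x y : EuclideanSpace ℝ (Fin 3)) : cross3 x y = - cross3 y x := by
  ext i; fin_cases i <;> simp [cross3] <;> ring

lemma cross3_triple (x y z : EuclideanSpace ℝ (Fin 3)) :
    cross3 x (cross3 y z) = ⟪x,z⟫ • y - ⟪x,y⟫ • z := by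
  ext i
  simp only [PiLp.inner_apply, RCLike.inner_apply, conj_trivial, Fin.sum_univ_three]
  fin_cases i <;> simp [cross3, PiLp.smul_apply, PiLp.sub_apply] <;> ring

theorem stmt_16 (a b : ℝ) (γ T N B : ℝ → EuclideanSpace ℝ (Fin 3)) (κ τ : ℝ → ℝ)
    (hγT : ∀ s ∈ Set.Ioo a b, HasDerivAt γ (T s) s)
    (hT1 : ∀ s ∈ Set.Ioo a b, ‖T s‖ = 1)
    (hN1 : ∀ s ∈ Set.Ioo a b, ‖N s‖ = 1)
    (hB1 : ∀ s ∈ Set.Ioo a b, ‖B s‖ = 1)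
    (hTN : ∀ s ∈ Set.Ioo a b, ⟪T s, N s⟫ = 0)
    (hTB : ∀ s ∈ Set.Ioo a b, ⟪T s, B s⟫ = 0)
    (hNB : ∀ s ∈ Set.Ioo a b, ⟪N s, B s⟫ = 0)
    (horient : ∀ s ∈ Set.Ioo a b, B s = cross3 (T s) (N s))
    (hκpos : ∀ s ∈ Set.Ioo a b, 0 < κ s)
    (hTder : ∀ s ∈ Set.Ioo a b, HasDerivAt T (κ s • N s) s)
    (hNder : ∀ s ∈ Set.Ioo a b, HasDerivAt N ((-κ s) • T s + τ s • B s) s)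
    (hBder : ∀ s ∈ Set.Ioo a b, HasDerivAt B ((-τ s) • N s) s)
    (hκd : ∀ s ∈ Set.Ioo a b, DifferentiableAt ℝ κ s)
    (hτd : ∀ s ∈ Set.Ioo a b, DifferentiableAt ℝ τ s)
    (γN : ℝ → EuclideanSpace ℝ (Fin 3))
    (hγN : ∀ s ∈ Set.Ioo a b, HasDerivAt γN (N s) s) :
    ∃ N₁ B₁ : ℝ → EuclideanSpace ℝ (Fin 3), ∀ s ∈ Set.Ioo a b,
      ‖N s‖ = 1 ∧
      0 < Real.sqrt (κ s ^ 2 + τ s ^ 2) ∧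
      HasDerivAt N (Real.sqrt (κ s ^ 2 + τ s ^ 2) • N₁ s) s ∧
      ‖N₁ s‖ = 1 ∧
      B₁ s = cross3 (N s) (N₁ s) ∧
      HasDerivAt B₁
        ((-(κ s ^ 2 / (κ s ^ 2 + τ s ^ 2) * deriv (fun t => τ t / κ t) s)) • N₁ s) s := by
  refine ⟨fun s => (Real.sqrt (κ s ^ 2 + τ s ^ 2))⁻¹ • ((-κ s) • T s + τ s • B s),
    fun s => (Real.sqrt (κ s ^ 2 + τ s ^ 2))⁻¹ • (τ s • T s + κ s • B s), fun s hs => ?_⟩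
  have kpos := hκpos s hs
  have hQpos : 0 < κ s ^ 2 + τ s ^ 2 := by positivity
  have hwpos : 0 < Real.sqrt (κ s ^ 2 + τ s ^ 2) := Real.sqrt_pos.2 hQpos
  set w : ℝ := Real.sqrt (κ s ^ 2 + τ s ^ 2) with hw
  have hw2 : w ^ 2 = κ s ^ 2 + τ s ^ 2 := Real.sq_sqrt hQpos.le
  have hwne : w ≠ 0 := hwpos.ne'
  have hTT : ⟪T s, T s⟫ = 1 := by
    rw [real_inner_self_eq_norm_sq, hT1 s hs]; norm_num
  have hNN : ⟪N s, N s⟫ = 1 := by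
    rw [real_inner_self_eq_norm_sq, hN1 s hs]; norm_num
  have hBB : ⟪B s, B s⟫ = 1 := by
    rw [real_inner_self_eq_norm_sq, hB1 s hs]; norm_num
  have hBT : ⟪B s, T s⟫ = 0 := by rw [real_inner_comm]; exact hTB s hs
  have hNT : ⟪N s, T s⟫ = 0 := by rw [real_inner_comm]; exact hTN s hs
  -- norm of v
  have hvnorm : ‖(-κ s) • T s + τ s • B s‖ = w := by
    have hv2 : ⟪(-κ s) • T s + τ s • B s, (-κ s) • T s + τ s • B s⟫ = κ s ^ 2 + τ s ^ 2 := by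
      simp only [inner_add_left, inner_add_right, real_inner_smul_left,
        real_inner_smul_right, hTT, hBB, hTB s hs, hBT]
      ring
    have := real_inner_self_eq_norm_sq ((-κ s) • T s + τ s • B s)
    rw [hv2] at this
    rw [hw, this, Real.sqrt_sq (norm_nonneg _)]
  refine ⟨hN1 s hs, hwpos, ?_, ?_, ?_, ?_⟩
  · rw [smul_smul, mul_inv_cancel₀ hwne, one_smul]
    exact hNder s hs
  · rw [norm_smul, hvnorm, norm_inv, Real.norm_of_nonneg hwpos.le, inv_mul_cancel₀ hwne]
  · -- B₁ s = cross3 (N s) (N₁ s)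
    rw [cross3_smul_right, cross3_add_right, cross3_smul_right, cross3_smul_right]
    have h1 : cross3 (N s) (T s) = -B s := by
      rw [cross3_skew, ← horient s hs]
    have h2 : cross3 (N s) (B s) = T s := by
      rw [horient s hs, cross3_triple, hNN, hNT]
      simp
    rw [h1, h2]
    module
  · -- derivative of B₁
    have hκ' : HasDerivAt κ (deriv κ s) s := (hκd s hs).hasDerivAt
    have hτ' : HasDerivAt τ (deriv τ s) s := (hτd s hs).hasDerivAt
    set k := κ s
    set t := τ s
    set k' := deriv κ s
    set t' := deriv τ s
    have hu : HasDerivAt (fun x => κ x ^ 2 + τ x ^ 2) (2 * k * k' + 2 * t * t') s := by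
      have := ((hκ'.pow 2).add (hτ'.pow 2))
      refine this.congr_deriv ?_
      push_cast
      ring
    have hws : HasDerivAt (fun x => Real.sqrt (κ x ^ 2 + τ x ^ 2))
        ((2 * k * k' + 2 * t * t') / (2 * Real.sqrt (κ s ^ 2 + τ s ^ 2))) s :=
      hu.sqrt hQpos.ne'
    have hwinv : HasDerivAt (fun x => (Real.sqrt (κ x ^ 2 + τ x ^ 2))⁻¹)
        (-((2 * k * k' + 2 * t * t') / (2 * w)) / w ^ 2) s := hws.inv hwne
    have hg : HasDerivAt (fun x => τ x • T x + κ x • B x)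
        ((t • (k • N s) + t' • T s) + (k • ((-t) • N s) + k' • B s)) s :=
      (hτ'.smul (hTder s hs)).add (hκ'.smul (hBder s hs))
    have hB₁ := hwinv.smul hg
    have hdiv : HasDerivAt (fun x => τ x / κ x) ((t' * k - t * k') / k ^ 2) s :=
      hτ'.div hκ' kpos.ne'
    have hd : deriv (fun x => τ x / κ x) s = (t' * k - t * k') / k ^ 2 := hdiv.deriv
    rw [hd]
    refine hB₁.congr_deriv (Eq.symm ?_)
    have e : Real.sqrt (κ s ^ 2 + τ s ^ 2) = w := rfl
    simp only [e]
    match_scalars <;> field_simp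
    · linear_combination (-t*(k*k'+t*t')) * hw2
    · linear_combination (-k*(k*k'+t*t')) * hw2
    · ring
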